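/- The dimension of V_α equals the number of standard immaculate tableaux of shape α, which equals the number of Y-words of content α. -/

import Mathlib

/-- A word is a `𝒴`-word if every occurrence of a letter `c+2` is preceded by an
occurrence of `c+1`. -/
def IsYWordF {n : ℕ} (w : Fin n → ℕ) : Prop :=
  ∀ (p : Fin n) (c : ℕ), w p = c + 2 → ∃ q, q < p ∧ w q = c + 1

/-- A word has content `α`. -/
def WordHasContent {n : ℕ} (c : Composition n) (w : Fin n → ℕ) : Prop :=
  (∀ p, 1 ≤ w p ∧ w p ≤ c.length) ∧
  ∀ j : Fin c.length,
    (Finset.univ.filter fun p => w p = (j : ℕ) + 1).card = c.blocksFun j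

/-- The quotient module `V_α = M_α / N_α`, realized with basis the `𝒴`-words of
content `α`. -/
abbrev Vmod (n : ℕ) (c : Composition n) :=
  {w : Fin n → ℕ // WordHasContent c w ∧ IsYWordF w} →₀ ℚ

/-- An immaculate tableau of shape `α` and content `β`, encoded as a list of rows. -/
def IsImmaculate (T : List (List ℕ)) (α β : List ℕ) : Prop :=
  T.map List.length = α ∧
  (∀ r ∈ T, List.Chain' (· ≤ ·) r) ∧
  List.Chain' (· < ·) (T.map List.headI) ∧
  (∀ x ∈ T.flatten, 0 < x) ∧
  (∀ i : ℕ, T.flatten.count (i + 1) = β.getD i 0)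

namespace VmodAux

open List


def rowOf (n : ℕ) (w : Fin n → ℕ) (j : ℕ) : List ℕ :=
  ((List.finRange n).filter (fun p => w p = j + 1)).map (fun p => p.val + 1)

def Phi (n ℓ : ℕ) (w : Fin n → ℕ) : List (List ℕ) :=
  (List.range ℓ).map (rowOf n w)

lemma mem_rowOf {n : ℕ} {w : Fin n → ℕ} {j m : ℕ} :
    m ∈ rowOf n w j ↔ ∃ p : Fin n, (p : ℕ) + 1 = m ∧ w p = j + 1 := by
  constructor
  · intro h
    obtain ⟨p, hp, rfl⟩ := List.mem_map.1 h
    exact ⟨p, rfl, by simpa using (List.mem_filter.1 hp).2⟩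
  · rintro ⟨p, rfl, hp⟩
    exact List.mem_map.2 ⟨p, List.mem_filter.2 ⟨List.mem_finRange p, by simpa using hp⟩, rfl⟩

lemma rowOf_sorted (n : ℕ) (w : Fin n → ℕ) (j : ℕ) :
    List.Pairwise (· < ·) (rowOf n w j) := by
  unfold rowOf
  rw [List.pairwise_map]
  exact ((List.pairwise_lt_finRange n).filter _).imp
    (fun h => Nat.add_lt_add_right h 1)

lemma length_rowOf (n : ℕ) (w : Fin n → ℕ) (j : ℕ) :
    (rowOf n w j).length = (Finset.univ.filter fun p => w p = j + 1).card := by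
  rw [rowOf, List.length_map]
  rfl

lemma sorted_headI_le {l : List ℕ} (hs : List.Pairwise (· < ·) l) {a : ℕ} (ha : a ∈ l) :
    l.headI ≤ a := by
  cases l with
  | nil => simp at ha
  | cons b t =>
    rcases List.mem_cons.1 ha with rfl | h
    · simp
    · exact le_of_lt (List.rel_of_pairwise_cons hs h)

lemma headI_mem {l : List ℕ} (h : l ≠ []) : l.headI ∈ l := by
  cases l with
  | nil => simp at h
  | cons b t => simp


lemma chain'_map_range {R : ℕ → ℕ → Prop} {g : ℕ → ℕ} {ℓ : ℕ}
    (h : ∀ i, i + 1 < ℓ → R (g i) (g (i + 1))) :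
    List.Chain' R ((List.range ℓ).map g) := by
  unfold List.Chain'; rw [List.isChain_iff_getElem]
  intro i hi
  simp only [List.length_map, List.length_range] at hi
  simp only [List.getElem_map, List.getElem_range]
  exact h i (by omega)

lemma chain'_map_range_iff {R : ℕ → ℕ → Prop} {g : ℕ → ℕ} {ℓ : ℕ} :
    List.Chain' R ((List.range ℓ).map g) ↔ ∀ i, i + 1 < ℓ → R (g i) (g (i + 1)) := by
  unfold List.Chain'; rw [List.isChain_iff_getElem]
  constructor
  · intro h i hi
    have := h i (by simp; omega)
    simpa using this
  · intro h i hi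
    simp only [List.length_map, List.length_range] at hi
    simp only [List.getElem_map, List.getElem_range]
    exact h i (by omega)

lemma list_sum_eq_range {L : List ℕ} :
    L.sum = ∑ i ∈ Finset.range L.length, L.getD i 0 := by
  induction L with
  | nil => simp
  | cons a t ih =>
    rw [List.sum_cons, ih, List.length_cons, Finset.sum_range_succ']
    simp [List.getD, Nat.add_comm]

lemma sum_map_range {g : ℕ → ℕ} {ℓ : ℕ} :
    ((List.range ℓ).map g).sum = ∑ j ∈ Finset.range ℓ, g j := by
  rw [list_sum_eq_range]
  simp only [List.length_map, List.length_range]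
  refine Finset.sum_congr rfl fun x hx => ?_
  rw [Finset.mem_range] at hx
  simp [List.getD, List.getElem?_map, List.getElem?_range hx]

lemma sorted_lt_nodup {l : List ℕ} (h : List.Pairwise (· < ·) l) : l.Nodup :=
  h.imp (fun h => ne_of_lt h)

lemma eq_of_sorted_lt_of_mem_iff {l₁ l₂ : List ℕ} (h₁ : List.Pairwise (· < ·) l₁)
    (h₂ : List.Pairwise (· < ·) l₂) (h : ∀ a, a ∈ l₁ ↔ a ∈ l₂) : l₁ = l₂ := by
  haveI : IsAntisymm ℕ (· < ·) := ⟨fun a b h h' => absurd h' (lt_asymm h)⟩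
  refine List.Perm.eq_of_pairwise (fun a b _ _ h h' => absurd h' (lt_asymm h)) h₁ h₂ ?_
  refine List.perm_of_nodup_nodup_toFinset_eq (sorted_lt_nodup h₁) (sorted_lt_nodup h₂) ?_
  ext a; simp [h a]

lemma count_rowOf {n : ℕ} (w : Fin n → ℕ) (j i : ℕ) :
    (rowOf n w j).count (i + 1) =
      if h : i < n then (if w ⟨i, h⟩ = j + 1 then 1 else 0) else 0 := by
  unfold rowOf
  split
  · rename_i h
    have : i + 1 = (fun p : Fin n => p.val + 1) ⟨i, h⟩ := rfl
    rw [this, List.count_map_of_injective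
      ((List.finRange n).filter fun p => decide (w p = j + 1))
      (fun p : Fin n => p.val + 1)
      (fun a b hab => by apply Fin.ext; simpa using hab) ⟨i, h⟩]
    have hnd : ((List.finRange n).filter (fun p => w p = j + 1)).Nodup :=
      (List.nodup_finRange n).filter _
    split
    · rename_i hw
      exact List.count_eq_one_of_mem hnd
        (List.mem_filter.2 ⟨List.mem_finRange _, by simpa using hw⟩)
    · rename_i hw
      exact List.count_eq_zero_of_not_mem (fun hc => hw (by simpa using (List.mem_filter.1 hc).2))
  · rename_i h
    refine List.count_eq_zero_of_not_mem (fun hc => ?_)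
    obtain ⟨p, _, hp⟩ := List.mem_map.1 hc
    omega

lemma count_flatten_Phi {n ℓ : ℕ} (w : Fin n → ℕ) (i : ℕ) :
    (Phi n ℓ w).flatten.count (i + 1) =
      ∑ j ∈ Finset.range ℓ, (rowOf n w j).count (i + 1) := by
  rw [Phi, List.count_flatten, List.map_map, sum_map_range]
  rfl

lemma chain'_map_range_iff' {α : Type*} {R : α → α → Prop} {g : ℕ → α} {ℓ : ℕ} :
    List.Chain' R ((List.range ℓ).map g) ↔ ∀ i, i + 1 < ℓ → R (g i) (g (i + 1)) := by
  unfold List.Chain'; rw [List.isChain_iff_getElem]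
  constructor
  · intro h i hi
    have := h i (by simp [List.length_map, List.length_range]; omega)
    simpa using this
  · intro h i hi
    simp only [List.length_map, List.length_range] at hi
    simp only [List.getElem_map, List.getElem_range]
    exact h i (by omega)

theorem Phi_immaculate {n : ℕ} (c : Composition n) (w : Fin n → ℕ)
    (hw : WordHasContent c w) (hy : IsYWordF w) :
    IsImmaculate (Phi n c.length w) c.blocks (List.replicate n 1) := by
  obtain ⟨hbd, hcnt⟩ := hw
  have hlr : ∀ j : Fin c.length, (rowOf n w j).length = c.blocksFun j := by
    intro j; rw [length_rowOf]; exact hcnt j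
  have hne : ∀ j : Fin c.length, rowOf n w (j : ℕ) ≠ [] := by
    intro j
    have := c.one_le_blocksFun j
    intro h
    have h2 := hlr j
    rw [h] at h2
    simp at h2
    omega
  refine ⟨?_, ?_, ?_, ?_, ?_⟩
  · -- lengths
    refine List.ext_getElem ?_ ?_
    · simp [Phi, c.blocks_length]
    · intro j h1 h2
      simp only [Phi, List.length_map, List.length_range] at h1
      simp only [Phi, List.getElem_map, List.getElem_range]
      exact hlr ⟨j, h1⟩
  · -- rows weakly increasing
    intro r hr
    simp only [Phi, List.mem_map, List.mem_range] at hr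
    obtain ⟨j, _, rfl⟩ := hr
    exact ((rowOf_sorted n w j).imp fun h => le_of_lt h).isChain
  · -- heads
    rw [Phi, List.map_map]
    rw [chain'_map_range_iff']
    intro i hi
    simp only [Function.comp]
    have hne2 : rowOf n w (i+1) ≠ [] := hne ⟨i+1, hi⟩
    have hmem := headI_mem hne2
    obtain ⟨p, hp1, hp2⟩ := mem_rowOf.1 hmem
    obtain ⟨q, hq, hwq⟩ := hy p i hp2
    have hqm : (q : ℕ) + 1 ∈ rowOf n w i := mem_rowOf.2 ⟨q, rfl, hwq⟩
    have := sorted_headI_le (rowOf_sorted n w i) hqm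
    have hqp : (q:ℕ) < (p:ℕ) := hq
    omega
  · -- positivity
    intro x hx
    rw [List.mem_flatten] at hx
    obtain ⟨r, hr, hx⟩ := hx
    simp only [Phi, List.mem_map, List.mem_range] at hr
    obtain ⟨j, _, rfl⟩ := hr
    obtain ⟨p, hp, _⟩ := mem_rowOf.1 hx
    omega
  · -- counts
    intro i
    rw [count_flatten_Phi]
    by_cases h : i < n
    · have : ∀ j ∈ Finset.range c.length, (rowOf n w j).count (i+1)
          = if j = w ⟨i, h⟩ - 1 then 1 else 0 := by
        intro j _
        rw [count_rowOf, dif_pos h]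
        have := (hbd ⟨i, h⟩).1
        congr 1
        simp only [eq_iff_iff]
        omega
      rw [Finset.sum_congr rfl this, Finset.sum_ite_eq' (Finset.range c.length)]
      have h1 := (hbd ⟨i, h⟩).1
      have h2 := (hbd ⟨i, h⟩).2
      rw [if_pos (Finset.mem_range.2 (by omega))]
      rw [List.getD_eq_getElem?_getD]
      simp [List.getElem?_replicate, h]
    · have : ∀ j ∈ Finset.range c.length, (rowOf n w j).count (i+1) = 0 := by
        intro j _
        rw [count_rowOf, dif_neg h]
      rw [Finset.sum_congr rfl this, Finset.sum_const_zero]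
      rw [List.getD_eq_getElem?_getD]
      have : ¬ i < n := h
      simp [List.getElem?_replicate, this]

theorem exists_word (n : ℕ) (c : Composition n) (T : List (List ℕ))
    (hT : IsImmaculate T c.blocks (List.replicate n 1)) :
    ∃ w : Fin n → ℕ, (WordHasContent c w ∧ IsYWordF w) ∧ Phi n c.length w = T := by
  obtain ⟨hsh, hrow, hhead, hpos, hcov⟩ := hT
  have hTlen : T.length = c.length := by
    have := congrArg List.length hsh
    simpa [c.blocks_length] using this
  have hcount : ∀ i : ℕ, T.flatten.count (i + 1) = if i < n then 1 else 0 := by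
    intro i
    rw [hcov i, List.getD_eq_getElem?_getD]
    by_cases h : i < n <;> simp [List.getElem?_replicate, h]
  have hmemflat : ∀ m ∈ T.flatten, 1 ≤ m ∧ m ≤ n := by
    intro m hm
    refine ⟨hpos m hm, ?_⟩
    by_contra hc
    have h1 : m = (m - 1) + 1 := by have := hpos m hm; omega
    have := hcount (m - 1)
    rw [if_neg (by omega), ← h1] at this
    rw [List.count_eq_zero] at this
    exact this hm
  have hflatmem : ∀ p : Fin n, (p : ℕ) + 1 ∈ T.flatten := by
    intro p
    rw [← List.count_pos_iff]
    rw [hcount p, if_pos p.2]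
    omega
  -- sum decomposition of counts
  have hsum : ∀ a : ℕ, T.flatten.count a =
      ∑ j ∈ Finset.range T.length, (T.getD j []).count a := by
    intro a
    rw [List.count_flatten, list_sum_eq_range, List.length_map]
    refine Finset.sum_congr rfl fun j hj => ?_
    rw [Finset.mem_range] at hj
    rw [List.getD_eq_getElem?_getD, List.getElem?_map, List.getElem?_eq_getElem hj,
      List.getD_eq_getElem?_getD, List.getElem?_eq_getElem hj]
    rfl
  have hgetDmem : ∀ j : ℕ, j < T.length → T.getD j [] ∈ T := by
    intro j hj
    rw [List.getD_eq_getElem?_getD, List.getElem?_eq_getElem hj]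
    exact List.getElem_mem hj
  have huniq : ∀ (m : ℕ) (j j' : ℕ), j < T.length → j' < T.length →
      m ∈ T.getD j [] → m ∈ T.getD j' [] → j = j' := by
    intro m j j' hj hj' hmj hmj'
    by_contra hne
    have hmf : m ∈ T.flatten := List.mem_flatten.2 ⟨_, hgetDmem j hj, hmj⟩
    obtain ⟨hm1, hm2⟩ := hmemflat m hmf
    have hc1 : T.flatten.count m = 1 := by
      have := hcount (m - 1)
      rw [if_pos (by omega)] at this
      rwa [show m - 1 + 1 = m by omega] at this
    have hsub : ({j, j'} : Finset ℕ) ⊆ Finset.range T.length := by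
      intro x hx
      simp only [Finset.mem_insert, Finset.mem_singleton] at hx
      rcases hx with rfl | rfl <;> simp [Finset.mem_range, hj, hj']
    have h3 := Finset.sum_le_sum_of_subset hsub (f := fun x => (T.getD x []).count m)
    rw [← hsum, Finset.sum_pair hne] at h3
    have := List.count_pos_iff.2 hmj
    have := List.count_pos_iff.2 hmj'
    omega
  have hcountrow : ∀ (j : ℕ), j < T.length → ∀ a : ℕ, (T.getD j []).count a ≤ 1 := by
    intro j hj a
    by_cases ha : a ∈ T.getD j []
    · have hmf : a ∈ T.flatten := List.mem_flatten.2 ⟨_, hgetDmem j hj, ha⟩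
      obtain ⟨hm1, hm2⟩ := hmemflat a hmf
      have hc1 : T.flatten.count a = 1 := by
        have := hcount (a - 1)
        rw [if_pos (by omega)] at this
        rwa [show a - 1 + 1 = a by omega] at this
      have h3 := Finset.single_le_sum (f := fun x => (T.getD x []).count a)
        (fun i _ => Nat.zero_le _) (Finset.mem_range.2 hj)
      rw [← hsum, hc1] at h3
      exact h3
    · rw [List.count_eq_zero_of_not_mem ha]; omega
  have hnodup : ∀ j : ℕ, j < T.length → (T.getD j []).Nodup := by
    intro j hj
    rw [List.nodup_iff_count_le_one]
    exact hcountrow j hj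
  have hsorted : ∀ j : ℕ, j < T.length → List.Pairwise (· < ·) (T.getD j []) := by
    intro j hj
    have h1 : List.Chain' (· ≤ ·) (T.getD j []) := hrow _ (hgetDmem j hj)
    unfold List.Chain' at h1; rw [List.isChain_iff_pairwise] at h1
    exact (h1.and (hnodup j hj)).imp fun h => lt_of_le_of_ne h.1 h.2
  have hlens : ∀ j : Fin c.length, (T.getD (j : ℕ) []).length = c.blocksFun j := by
    intro j
    have hj : (j : ℕ) < T.length := by omega
    have hj2 : (j : ℕ) < c.blocks.length := by rw [c.blocks_length]; exact j.2
    have hthis := congrArg (fun l => l[(j : ℕ)]?) hsh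
    simp only [List.getElem?_map, List.getElem?_eq_getElem hj,
      List.getElem?_eq_getElem hj2, Option.map_some, Option.some.injEq] at hthis
    rw [List.getD_eq_getElem?_getD, List.getElem?_eq_getElem hj, Option.getD_some, hthis]
    rfl
  have hrowne : ∀ j : Fin c.length, T.getD (j : ℕ) [] ≠ [] := by
    intro j h
    have h1 := hlens j
    rw [h] at h1
    have := c.one_le_blocksFun j
    simp at h1
    omega
  -- the word
    -- findIdx-based
  set w : Fin n → ℕ := fun p => T.findIdx (fun r => decide ((p : ℕ) + 1 ∈ r)) + 1 with hw
  have hfindlt : ∀ p : Fin n, T.findIdx (fun r => decide ((p : ℕ) + 1 ∈ r)) < T.length := by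
    intro p
    apply List.findIdx_lt_length_of_exists
    obtain ⟨r, hr, hmr⟩ := List.mem_flatten.1 (hflatmem p)
    exact ⟨r, hr, by simpa using hmr⟩
  have hfindmem : ∀ p : Fin n,
      (p : ℕ) + 1 ∈ T.getD (T.findIdx (fun r => decide ((p : ℕ) + 1 ∈ r))) [] := by
    intro p
    have h := List.findIdx_getElem (p := fun r => decide ((p : ℕ) + 1 ∈ r))
      (xs := T) (w := hfindlt p)
    rw [List.getD_eq_getElem?_getD, List.getElem?_eq_getElem (hfindlt p)]
    simpa using h
  have hmemiff : ∀ (p : Fin n) (j : ℕ), j < T.length →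
      ((p : ℕ) + 1 ∈ T.getD j [] ↔ w p = j + 1) := by
    intro p j hj
    constructor
    · intro hm
      have := huniq ((p : ℕ) + 1) _ j (hfindlt p) hj (hfindmem p) hm
      simp only [hw]
      omega
    · intro hm
      have hfi : T.findIdx (fun r => decide ((p : ℕ) + 1 ∈ r)) = j := by
        simp only [hw] at hm; omega
      rw [← hfi]
      exact hfindmem p
  -- membership characterization of rows
  have hrowmem : ∀ (j : ℕ), j < T.length → ∀ m : ℕ,
      (m ∈ T.getD j [] ↔ ∃ p : Fin n, (p : ℕ) + 1 = m ∧ w p = j + 1) := by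
    intro j hj m
    constructor
    · intro hm
      have hmf : m ∈ T.flatten := List.mem_flatten.2 ⟨_, hgetDmem j hj, hm⟩
      obtain ⟨h1, h2⟩ := hmemflat m hmf
      refine ⟨⟨m - 1, by omega⟩, by simp; omega, ?_⟩
      rw [← hmemiff ⟨m - 1, by omega⟩ j hj]
      simpa [show m - 1 + 1 = m by omega] using hm
    · rintro ⟨p, rfl, hp⟩
      exact (hmemiff p j hj).2 hp
  refine ⟨w, ⟨⟨?_, ?_⟩, ?_⟩, ?_⟩
  · -- bounds
    intro p
    have := hfindlt p
    simp only [hw]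
    omega
  · -- counts
    intro j
    have hj : (j : ℕ) < T.length := by omega
    rw [← hlens j]
    have himg : Finset.image (fun p : Fin n => (p : ℕ) + 1)
        (Finset.univ.filter fun p => w p = (j : ℕ) + 1) = (T.getD (j : ℕ) []).toFinset := by
      ext a
      simp only [Finset.mem_image, Finset.mem_filter, Finset.mem_univ, true_and,
        List.mem_toFinset]
      rw [hrowmem j hj a]
      constructor
      · rintro ⟨p, hp, rfl⟩; exact ⟨p, rfl, hp⟩
      · rintro ⟨p, rfl, hp⟩; exact ⟨p, hp, rfl⟩
    have hinj : Function.Injective (fun p : Fin n => (p : ℕ) + 1) := by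
      intro a b hab; apply Fin.ext; simpa using hab
    have := Finset.card_image_of_injective
      (Finset.univ.filter fun p => w p = (j : ℕ) + 1) hinj
    rw [himg, List.toFinset_card_of_nodup (hnodup _ hj)] at this
    omega
  · -- Y-word
    intro p c0 hp
    have hfi : T.findIdx (fun r => decide ((p : ℕ) + 1 ∈ r)) = c0 + 1 := by
      simp only [hw] at hp; omega
    have hc1 : c0 + 1 < T.length := hfi ▸ hfindlt p
    have hmem1 : (p : ℕ) + 1 ∈ T.getD (c0 + 1) [] := hfi ▸ hfindmem p
    have hc0 : c0 < c.length := by omega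
    have hne0 : T.getD c0 [] ≠ [] := hrowne ⟨c0, hc0⟩
    have hheads : (T.getD c0 []).headI < (T.getD (c0 + 1) []).headI := by
      unfold List.Chain' at hhead; rw [List.isChain_iff_getElem] at hhead
      have := hhead c0 (by simp [List.length_map]; omega)
      simp only [List.getElem_map] at this
      convert this using 2 <;>
        rw [List.getD_eq_getElem?_getD, List.getElem?_eq_getElem (by omega)] <;> rfl
    have hle : (T.getD (c0 + 1) []).headI ≤ (p : ℕ) + 1 :=
      sorted_headI_le (hsorted _ hc1) hmem1
    have hm0 : (T.getD c0 []).headI ∈ T.getD c0 [] := headI_mem hne0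
    obtain ⟨hq1, hq2⟩ := hmemflat _ (List.mem_flatten.2 ⟨_, hgetDmem c0 (by omega), hm0⟩)
    refine ⟨⟨(T.getD c0 []).headI - 1, by omega⟩, ?_, ?_⟩
    · simp only [Fin.lt_def]
      omega
    · rw [← hmemiff _ c0 (by omega)]
      show (T.getD c0 []).headI - 1 + 1 ∈ T.getD c0 []
      rw [show (T.getD c0 []).headI - 1 + 1 = (T.getD c0 []).headI by omega]
      exact hm0
  · -- Phi w = T
    refine List.ext_getElem ?_ ?_
    · simp [Phi, hTlen]
    · intro j h1 h2
      simp only [Phi, List.length_map, List.length_range] at h1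
      simp only [Phi, List.getElem_map, List.getElem_range]
      have hj : j < T.length := by omega
      have : T[j] = T.getD j [] := by
        rw [List.getD_eq_getElem?_getD, List.getElem?_eq_getElem hj]; rfl
      rw [this]
      refine eq_of_sorted_lt_of_mem_iff (rowOf_sorted n w j) (hsorted j hj) fun a => ?_
      rw [mem_rowOf, hrowmem j hj a]

lemma Phi_inj {n : ℕ} (c : Composition n) {w w' : Fin n → ℕ}
    (hw : WordHasContent c w) (h : Phi n c.length w = Phi n c.length w') : w = w' := by
  funext p
  obtain ⟨h1, h2⟩ := hw.1 p
  have hj : w p - 1 < c.length := by omega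
  have hwp : w p = (w p - 1) + 1 := by omega
  have hmem : (p : ℕ) + 1 ∈ rowOf n w (w p - 1) := mem_rowOf.2 ⟨p, rfl, by omega⟩
  have heq : rowOf n w (w p - 1) = rowOf n w' (w p - 1) := by
    have := congrArg (fun L => L.getD (w p - 1) []) h
    simpa [Phi, List.getD_eq_getElem?_getD, List.getElem?_map, List.getElem?_range hj]
      using this
  rw [heq] at hmem
  obtain ⟨q, hq1, hq2⟩ := mem_rowOf.1 hmem
  have hqp : q = p := Fin.ext (by omega)
  rw [hqp] at hq2
  omega

end VmodAux

open VmodAux in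
/-- The dimension of `V_α` equals the number of `𝒴`-words of content `α`, which
equals the number of standard immaculate tableaux of shape `α`. -/
theorem Vmod_dim (n : ℕ) (c : Composition n) :
    Module.finrank ℚ (Vmod n c) =
      Nat.card {w : Fin n → ℕ // WordHasContent c w ∧ IsYWordF w} ∧
    Nat.card {w : Fin n → ℕ // WordHasContent c w ∧ IsYWordF w} =
      Nat.card {T : List (List ℕ) //
        IsImmaculate T c.blocks (List.replicate n 1)} := by
  haveI : Finite {w : Fin n → ℕ // WordHasContent c w ∧ IsYWordF w} := by
    refine Finite.of_injective
      (fun s => (fun p => (⟨s.1 p, by have := s.2.1.1 p; omega⟩ : Fin (c.length + 1)))) ?_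
    intro s t hst
    apply Subtype.ext
    funext p
    have := congrFun hst p
    simpa [Fin.ext_iff] using this
  constructor
  · haveI := Fintype.ofFinite {w : Fin n → ℕ // WordHasContent c w ∧ IsYWordF w}
    rw [Nat.card_eq_fintype_card]
    exact Module.finrank_finsupp_self ℚ
  · refine Nat.card_eq_of_bijective
      (fun s => ⟨Phi n c.length s.1, Phi_immaculate c s.1 s.2.1 s.2.2⟩) ⟨?_, ?_⟩
    · intro s t hst
      exact Subtype.ext (Phi_inj c s.2.1 (congrArg Subtype.val hst))
    · rintro ⟨T, hT⟩
      obtain ⟨w, hw, hphi⟩ := exists_word n c T hT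
      exact ⟨⟨w, hw⟩, Subtype.ext hphi⟩
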